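/- In a B3-category, the two canonical maps e₁, e₂ : f → t defined from medial (e.g. e₁ = ρ_t ∘ (λ∨-unitors) ∘ m_{f,t,t,f} ∘ (ρ⁻¹∨λ⁻¹) ∘ λ_f⁻¹) both coincide with Π_f and with ⊓_t; in particular every B3-category is single-mixed: Π_f = ⊓_t : f → t. -/

import Mathlib

open CategoryTheory CategoryTheory.MonoidalCategory

universe v u

/-- The canonical "middle-exchange" map `(A∧B)∧(X∧Y) ⟶ (A∧X)∧(B∧Y)` for the
`∧`-monoidal structure (i.e. `id ∧ σ ∧ id` up to coherence). -/
def exch {C : Type u} [Category.{v} C] [MonoidalCategory C] [SymmetricCategory C]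
    (A B X Y : C) : (A ⊗ B) ⊗ (X ⊗ Y) ⟶ (A ⊗ X) ⊗ (B ⊗ Y) :=
  (α_ A B (X ⊗ Y)).hom ≫ (𝟙 A ⊗ₘ (α_ B X Y).inv) ≫
    (𝟙 A ⊗ₘ ((β_ B X).hom ⊗ₘ 𝟙 Y)) ≫ (𝟙 A ⊗ₘ (α_ X B Y).hom) ≫ (α_ A X (B ⊗ Y)).inv

/-- A second symmetric monoidal structure (the "disjunction" `∨` with unit `f`)
on a category, given as explicit data with the usual naturality and coherence
axioms of a symmetric monoidal category. -/
structure VStr (C : Type u) [Category.{v} C] where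
  vee : C → C → C
  vHom : ∀ {A B X Y : C}, (A ⟶ B) → (X ⟶ Y) → (vee A X ⟶ vee B Y)
  bot : C
  vHom_id : ∀ A B : C, vHom (𝟙 A) (𝟙 B) = 𝟙 (vee A B)
  vHom_comp : ∀ {A B X Y Z W : C} (f : A ⟶ B) (g : B ⟶ X) (h : Y ⟶ Z) (k : Z ⟶ W),
    vHom (f ≫ g) (h ≫ k) = vHom f h ≫ vHom g k
  vassoc : ∀ A B X : C, vee (vee A B) X ≅ vee A (vee B X)
  vbraid : ∀ A B : C, vee A B ≅ vee B A
  vrunit : ∀ A : C, vee A bot ≅ A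
  vlunit : ∀ A : C, vee bot A ≅ A
  vassoc_nat : ∀ {A B X A' B' X' : C} (f : A ⟶ A') (g : B ⟶ B') (h : X ⟶ X'),
    vHom (vHom f g) h ≫ (vassoc A' B' X').hom = (vassoc A B X).hom ≫ vHom f (vHom g h)
  vbraid_nat : ∀ {A B A' B' : C} (f : A ⟶ A') (g : B ⟶ B'),
    vHom f g ≫ (vbraid A' B').hom = (vbraid A B).hom ≫ vHom g f
  vrunit_nat : ∀ {A A' : C} (f : A ⟶ A'),
    vHom f (𝟙 bot) ≫ (vrunit A').hom = (vrunit A).hom ≫ f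
  vlunit_nat : ∀ {A A' : C} (f : A ⟶ A'),
    vHom (𝟙 bot) f ≫ (vlunit A').hom = (vlunit A).hom ≫ f
  vpentagon : ∀ A B X Y : C,
    (vassoc (vee A B) X Y).hom ≫ (vassoc A B (vee X Y)).hom =
      vHom (vassoc A B X).hom (𝟙 Y) ≫ (vassoc A (vee B X) Y).hom ≫
        vHom (𝟙 A) (vassoc B X Y).hom
  vhexagon : ∀ A B X : C,
    (vassoc A B X).hom ≫ (vbraid A (vee B X)).hom ≫ (vassoc B X A).hom =
      vHom (vbraid A B).hom (𝟙 X) ≫ (vassoc B A X).hom ≫ vHom (𝟙 B) (vbraid A X).hom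
  vtriangle : ∀ A B : C,
    (vassoc A bot B).hom ≫ vHom (𝟙 A) (vlunit B).hom = vHom (vrunit A).hom (𝟙 B)
  vsymm : ∀ A B : C, (vbraid A B).hom ≫ (vbraid B A).hom = 𝟙 (vee A B)

namespace VStr

variable {C : Type u} [Category.{v} C] (S : VStr C)

/-- The middle-exchange map `(A∨B)∨(X∨Y) ⟶ (A∨X)∨(B∨Y)` for the `∨`-structure. -/
def vexch (A B X Y : C) :
    S.vee (S.vee A B) (S.vee X Y) ⟶ S.vee (S.vee A X) (S.vee B Y) :=
  (S.vassoc A B (S.vee X Y)).hom ≫ S.vHom (𝟙 A) (S.vassoc B X Y).inv ≫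
    S.vHom (𝟙 A) (S.vHom (S.vbraid B X).hom (𝟙 Y)) ≫
    S.vHom (𝟙 A) (S.vassoc X B Y).hom ≫ (S.vassoc A X (S.vee B Y)).inv

end VStr

/-- A `B2`-category structure (without the `*`-autonomous negation): two
symmetric monoidal structures `∧` (the ambient one) and `∨` (given by a
`VStr`), cocommutative `∧`-comonoids `(Δ, Π)` and commutative `∨`-monoids
`(∇, ⊓)` on every object, satisfying the axioms B2a, B2c and their duals. -/
structure B2 (C : Type u) [Category.{v} C] [MonoidalCategory C] [SymmetricCategory C]
    extends VStr C where
  Δ : ∀ A : C, A ⟶ A ⊗ A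
  Pi : ∀ A : C, A ⟶ 𝟙_ C
  coassoc : ∀ A : C, Δ A ≫ (Δ A ⊗ₘ 𝟙 A) ≫ (α_ A A A).hom = Δ A ≫ (𝟙 A ⊗ₘ Δ A)
  cocomm : ∀ A : C, Δ A ≫ (β_ A A).hom = Δ A
  counit_r : ∀ A : C, Δ A ≫ (𝟙 A ⊗ₘ Pi A) ≫ (ρ_ A).hom = 𝟙 A
  counit_l : ∀ A : C, Δ A ≫ (Pi A ⊗ₘ 𝟙 A) ≫ (λ_ A).hom = 𝟙 A
  nab : ∀ A : C, vee A A ⟶ A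
  cap : ∀ A : C, bot ⟶ A
  vcoassoc : ∀ A : C, (vassoc A A A).hom ≫ vHom (𝟙 A) (nab A) ≫ nab A =
    vHom (nab A) (𝟙 A) ≫ nab A
  vcomm : ∀ A : C, (vbraid A A).hom ≫ nab A = nab A
  vunit_r : ∀ A : C, (vrunit A).inv ≫ vHom (𝟙 A) (cap A) ≫ nab A = 𝟙 A
  vunit_l : ∀ A : C, (vlunit A).inv ≫ vHom (cap A) (𝟙 A) ≫ nab A = 𝟙 A
  B2a : Pi (𝟙_ C) = 𝟙 (𝟙_ C)
  B2c : ∀ A B : C, Δ (A ⊗ B) = (Δ A ⊗ₘ Δ B) ≫ exch A A B B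
  B2a' : cap bot = 𝟙 bot
  B2c' : ∀ A B : C, nab (vee A B) = toVStr.vexch A B A B ≫ vHom (nab A) (nab B)

/-- A `B2`-category with a natural medial map satisfying B3c and its dual B3c'. -/
structure B2M (C : Type u) [Category.{v} C] [MonoidalCategory C] [SymmetricCategory C]
    extends B2 C where
  med : ∀ A B X Y : C, vee (A ⊗ B) (X ⊗ Y) ⟶ (vee A X) ⊗ (vee B Y)
  med_nat : ∀ {A B X Y A' B' X' Y' : C}
    (f : A ⟶ A') (g : B ⟶ B') (h : X ⟶ X') (k : Y ⟶ Y'),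
    vHom (f ⊗ₘ g) (h ⊗ₘ k) ≫ med A' B' X' Y' = med A B X Y ≫ (vHom f h ⊗ₘ vHom g k)
  B3c : ∀ A B : C, Δ (vee A B) = vHom (Δ A) (Δ B) ≫ med A A B B
  B3c' : ∀ A B : C, nab (A ⊗ B) = med A B A B ≫ (nab A ⊗ₘ nab B)

/-- A `B3`-category: a `B2`-category with medial, a nullary medial map
satisfying B3b, its dual, and the axiom B3a (`nm = ∇_t`, dually `nm' = Δ_f`). -/
structure B3 (C : Type u) [Category.{v} C] [MonoidalCategory C] [SymmetricCategory C]
    extends B2M C where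
  nm : vee (𝟙_ C) (𝟙_ C) ⟶ 𝟙_ C
  B3b : ∀ A B : C, Pi (vee A B) = vHom (Pi A) (Pi B) ≫ nm
  B3a : nm = nab (𝟙_ C)
  nm' : bot ⟶ bot ⊗ bot
  B3b' : ∀ A B : C, cap (A ⊗ B) = nm' ≫ (cap A ⊗ₘ cap B)
  B3a' : nm' = Δ bot

namespace B3

variable {C : Type u} [Category.{v} C] [MonoidalCategory C] [SymmetricCategory C]
  (S : B3 C)

/-- A map is *strong* if it is both a `∨`-monoid morphism and a
`∧`-comonoid morphism. -/
def Strong {A B : C} (f : A ⟶ B) : Prop :=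
  S.nab A ≫ f = S.vHom f f ≫ S.nab B ∧
  S.cap A ≫ f = S.cap B ∧
  f ≫ S.Pi B = S.Pi A ∧
  f ≫ S.Δ B = S.Δ A ≫ (f ⊗ₘ f)

end B3

namespace B3Aux

variable {C : Type u} [Category.{v} C] [MonoidalCategory C] [SymmetricCategory C]
  (S : B3 C)

lemma rinv (A : C) : (ρ_ A).inv = S.Δ A ≫ (𝟙 A ⊗ₘ S.Pi A) := by
  rw [← cancel_mono (ρ_ A).hom]
  simpa using (S.counit_r A).symm

lemma linv (A : C) : (λ_ A).inv = S.Δ A ≫ (S.Pi A ⊗ₘ 𝟙 A) := by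
  rw [← cancel_mono (λ_ A).hom]
  simpa using (S.counit_l A).symm

lemma dt : S.Δ (𝟙_ C) = (ρ_ (𝟙_ C)).inv := by
  rw [rinv, S.B2a, MonoidalCategory.id_tensorHom_id, Category.comp_id]

lemma vluh (A : C) : S.vHom (S.cap A) (𝟙 A) ≫ S.nab A = (S.vlunit A).hom := by
  have h := S.vunit_l A
  rw [Iso.inv_comp_eq] at h
  simpa using h

lemma vruh (A : C) : S.vHom (𝟙 A) (S.cap A) ≫ S.nab A = (S.vrunit A).hom := by
  have h := S.vunit_r A
  rw [Iso.inv_comp_eq] at h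
  simpa using h

lemma nabb : S.nab S.bot = (S.vlunit S.bot).hom := by
  rw [← vluh, S.B2a', S.vHom_id, Category.id_comp]

lemma nabb' : S.nab S.bot = (S.vrunit S.bot).hom := by
  rw [← vruh, S.B2a', S.vHom_id, Category.id_comp]

lemma PiX : S.Pi (S.vee (𝟙_ C) (𝟙_ C)) = S.nab (𝟙_ C) := by
  rw [S.B3b, S.B2a, S.vHom_id, Category.id_comp, S.B3a]

lemma capZ : S.cap (S.bot ⊗ S.bot) = S.Δ S.bot := by
  rw [S.B3b', S.B2a', MonoidalCategory.id_tensorHom_id, Category.comp_id, S.B3a']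

/-- The common core computation: the middle part of both `e₁` and `e₂`
collapses to `(vlunit f).hom ≫ Π_f`. -/
lemma core :
    S.vHom (S.Δ S.bot) (S.Δ S.bot) ≫ S.med S.bot S.bot S.bot S.bot ≫
      ((S.nab S.bot ≫ S.Pi S.bot) ⊗ₘ (S.nab S.bot ≫ S.Pi S.bot)) ≫ (ρ_ (𝟙_ C)).hom
    = (S.vlunit S.bot).hom ≫ S.Pi S.bot := by
  rw [← MonoidalCategory.tensorHom_comp_tensorHom]
  slice_lhs 2 3 => rw [← S.B3c']
  rw [← capZ]
  have hsplit : S.vHom (S.cap (S.bot ⊗ S.bot)) (S.cap (S.bot ⊗ S.bot)) =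
      S.vHom (𝟙 S.bot) (S.cap (S.bot ⊗ S.bot)) ≫
        S.vHom (S.cap (S.bot ⊗ S.bot)) (𝟙 (S.bot ⊗ S.bot)) := by
    rw [← S.vHom_comp, Category.id_comp, Category.comp_id]
  rw [hsplit]
  slice_lhs 2 3 => rw [vluh]
  slice_lhs 1 2 => rw [S.vlunit_nat]
  rw [capZ]
  have hsplit2 : (S.Pi S.bot ⊗ₘ S.Pi S.bot) =
      (𝟙 S.bot ⊗ₘ S.Pi S.bot) ≫ (S.Pi S.bot ⊗ₘ 𝟙 (𝟙_ C)) := by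
    rw [MonoidalCategory.tensorHom_comp_tensorHom, Category.id_comp, Category.comp_id]
  rw [hsplit2]
  have hnat : (S.Pi S.bot ⊗ₘ 𝟙 (𝟙_ C)) ≫ (ρ_ (𝟙_ C)).hom = (ρ_ S.bot).hom ≫ S.Pi S.bot := by
    rw [MonoidalCategory.tensorHom_id, MonoidalCategory.rightUnitor_naturality]
  slice_lhs 4 5 => rw [hnat]
  slice_lhs 2 4 => rw [S.counit_r]
  simp

/-- `e₁ = Π_f`. -/
lemma e1Pi :
    (S.vlunit S.bot).inv ≫ S.vHom (ρ_ S.bot).inv (λ_ S.bot).inv ≫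
        S.med S.bot (𝟙_ C) (𝟙_ C) S.bot ≫
        ((S.vlunit (𝟙_ C)).hom ⊗ₘ (S.vrunit (𝟙_ C)).hom) ≫ (ρ_ (𝟙_ C)).hom
      = S.Pi S.bot := by
  rw [rinv, linv, S.vHom_comp]
  slice_lhs 3 4 => rw [S.med_nat (𝟙 S.bot) (S.Pi S.bot) (S.Pi S.bot) (𝟙 S.bot)]
  have htens : (S.vHom (𝟙 S.bot) (S.Pi S.bot) ⊗ₘ S.vHom (S.Pi S.bot) (𝟙 S.bot)) ≫
      ((S.vlunit (𝟙_ C)).hom ⊗ₘ (S.vrunit (𝟙_ C)).hom) =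
      ((S.nab S.bot ≫ S.Pi S.bot) ⊗ₘ (S.nab S.bot ≫ S.Pi S.bot)) := by
    rw [MonoidalCategory.tensorHom_comp_tensorHom, S.vlunit_nat, S.vrunit_nat, ← nabb, ← nabb']
  slice_lhs 4 5 => rw [htens]
  slice_lhs 2 5 => rw [core]
  simp

/-- `e₂ = Π_f`. -/
lemma e2Pi :
    (S.vlunit S.bot).inv ≫ S.vHom (λ_ S.bot).inv (ρ_ S.bot).inv ≫
        S.med (𝟙_ C) S.bot S.bot (𝟙_ C) ≫
        ((S.vrunit (𝟙_ C)).hom ⊗ₘ (S.vlunit (𝟙_ C)).hom) ≫ (ρ_ (𝟙_ C)).hom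
      = S.Pi S.bot := by
  rw [rinv, linv, S.vHom_comp]
  slice_lhs 3 4 => rw [S.med_nat (S.Pi S.bot) (𝟙 S.bot) (𝟙 S.bot) (S.Pi S.bot)]
  have htens : (S.vHom (S.Pi S.bot) (𝟙 S.bot) ⊗ₘ S.vHom (𝟙 S.bot) (S.Pi S.bot)) ≫
      ((S.vrunit (𝟙_ C)).hom ⊗ₘ (S.vlunit (𝟙_ C)).hom) =
      ((S.nab S.bot ≫ S.Pi S.bot) ⊗ₘ (S.nab S.bot ≫ S.Pi S.bot)) := by
    rw [MonoidalCategory.tensorHom_comp_tensorHom, S.vlunit_nat, S.vrunit_nat, ← nabb, ← nabb']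
  slice_lhs 4 5 => rw [htens]
  slice_lhs 2 5 => rw [core]
  simp

/-- `e₁ = ⊓_t`. -/
lemma e1cap :
    (S.vlunit S.bot).inv ≫ S.vHom (ρ_ S.bot).inv (λ_ S.bot).inv ≫
        S.med S.bot (𝟙_ C) (𝟙_ C) S.bot ≫
        ((S.vlunit (𝟙_ C)).hom ⊗ₘ (S.vrunit (𝟙_ C)).hom) ≫ (ρ_ (𝟙_ C)).hom
      = S.cap (𝟙_ C) := by
  rw [← vluh (S := S) (𝟙_ C), ← vruh (S := S) (𝟙_ C), ← MonoidalCategory.tensorHom_comp_tensorHom]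
  slice_lhs 3 4 => rw [← S.med_nat (S.cap (𝟙_ C)) (𝟙 (𝟙_ C)) (𝟙 (𝟙_ C)) (S.cap (𝟙_ C))]
  slice_lhs 2 3 => rw [← S.vHom_comp]
  have h1 : (ρ_ S.bot).inv ≫ (S.cap (𝟙_ C) ⊗ₘ 𝟙 (𝟙_ C)) = S.cap (𝟙_ C) ≫ (ρ_ (𝟙_ C)).inv := by
    rw [← cancel_mono (ρ_ (𝟙_ C)).hom]
    simp [MonoidalCategory.tensorHom_id, MonoidalCategory.rightUnitor_naturality]
  have h2 : (λ_ S.bot).inv ≫ (𝟙 (𝟙_ C) ⊗ₘ S.cap (𝟙_ C)) = S.cap (𝟙_ C) ≫ (λ_ (𝟙_ C)).inv := by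
    rw [← cancel_mono (λ_ (𝟙_ C)).hom]
    simp [MonoidalCategory.id_tensorHom, MonoidalCategory.leftUnitor_naturality]
  rw [h1, h2, S.vHom_comp, MonoidalCategory.unitors_inv_equal, ← dt]
  slice_lhs 3 4 => rw [← S.B3c]
  rw [← PiX]
  have hsplit2 : (S.Pi (S.vee (𝟙_ C) (𝟙_ C)) ⊗ₘ S.Pi (S.vee (𝟙_ C) (𝟙_ C))) =
      (𝟙 (S.vee (𝟙_ C) (𝟙_ C)) ⊗ₘ S.Pi (S.vee (𝟙_ C) (𝟙_ C))) ≫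
        (S.Pi (S.vee (𝟙_ C) (𝟙_ C)) ⊗ₘ 𝟙 (𝟙_ C)) := by
    rw [MonoidalCategory.tensorHom_comp_tensorHom, Category.id_comp, Category.comp_id]
  rw [hsplit2]
  have hnat : (S.Pi (S.vee (𝟙_ C) (𝟙_ C)) ⊗ₘ 𝟙 (𝟙_ C)) ≫ (ρ_ (𝟙_ C)).hom =
      (ρ_ (S.vee (𝟙_ C) (𝟙_ C))).hom ≫ S.Pi (S.vee (𝟙_ C) (𝟙_ C)) := by
    rw [MonoidalCategory.tensorHom_id, MonoidalCategory.rightUnitor_naturality]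
  slice_lhs 5 6 => rw [hnat]
  slice_lhs 3 5 => rw [S.counit_r]
  rw [PiX]
  have hsplit : S.vHom (S.cap (𝟙_ C)) (S.cap (𝟙_ C)) =
      S.vHom (𝟙 S.bot) (S.cap (𝟙_ C)) ≫ S.vHom (S.cap (𝟙_ C)) (𝟙 (𝟙_ C)) := by
    rw [← S.vHom_comp, Category.id_comp, Category.comp_id]
  rw [hsplit]
  slice_lhs 3 5 => rw [Category.id_comp, vluh]
  slice_lhs 2 3 => rw [S.vlunit_nat]
  simp

end B3Aux


/-- In a `B3`-category, the two canonical maps `e₁ e₂ : f ⟶ t` defined from the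
medial map both coincide with `Π_f` and with `⊓_t`; in particular every
`B3`-category is single-mixed: `Π_f = ⊓_t`. -/
theorem stmt15 {C : Type u} [Category.{v} C] [MonoidalCategory C] [SymmetricCategory C]
    (S : B3 C) :
    S.Pi S.bot = S.cap (𝟙_ C) ∧
    ((S.vlunit S.bot).inv ≫ S.vHom (ρ_ S.bot).inv (λ_ S.bot).inv ≫
        S.med S.bot (𝟙_ C) (𝟙_ C) S.bot ≫
        ((S.vlunit (𝟙_ C)).hom ⊗ₘ (S.vrunit (𝟙_ C)).hom) ≫ (ρ_ (𝟙_ C)).hom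
      = S.Pi S.bot) ∧
    ((S.vlunit S.bot).inv ≫ S.vHom (λ_ S.bot).inv (ρ_ S.bot).inv ≫
        S.med (𝟙_ C) S.bot S.bot (𝟙_ C) ≫
        ((S.vrunit (𝟙_ C)).hom ⊗ₘ (S.vlunit (𝟙_ C)).hom) ≫ (ρ_ (𝟙_ C)).hom
      = S.Pi S.bot) :=
  ⟨(B3Aux.e1Pi S).symm.trans (B3Aux.e1cap S), B3Aux.e1Pi S, B3Aux.e2Pi S⟩
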